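/- Let z > 0 and let f_z be the Stein equation solution f_z(x) = √(2π) e^{x²/2} Φ(x) (1 - Φ(z)) for x ≤ z. Then for every x with |x| ≤ z/2 the derivative satisfies |f_z'(x)| ≤ 2 e^{-z²/4}. -/

import Mathlib

open MeasureTheory Real Set Filter Topology

lemma integrable_gpdf : Integrable (fun u : ℝ => Real.exp (-u ^ 2 / 2)) := by
  have := integrable_exp_neg_mul_sq (by norm_num : (0:ℝ) < 1/2)
  convert this using 2 with u
  ring_nf

lemma integral_gpdf : ∫ u : ℝ, Real.exp (-u ^ 2 / 2) = Real.sqrt (2 * Real.pi) := by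
  have := integral_gaussian (1/2 : ℝ)
  simp only [show ∀ u : ℝ, -(1/2 : ℝ) * u ^ 2 = -u ^ 2 / 2 by intro u; ring] at this
  rw [this]
  rw [show Real.pi / (1/2) = 2 * Real.pi by ring]

lemma integral_mul_gpdf (z : ℝ) :
    ∫ u in Ioi z, u * Real.exp (-u ^ 2 / 2) = Real.exp (-z ^ 2 / 2) := by
  have hderiv : ∀ u ∈ Ici z, HasDerivAt (fun v => -Real.exp (-v ^ 2 / 2))
      (u * Real.exp (-u ^ 2 / 2)) u := by
    intro u _
    have h1 : HasDerivAt (fun v : ℝ => -v ^ 2 / 2) (-u) u := by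
      have := ((hasDerivAt_pow 2 u).neg.div_const 2)
      refine this.congr_deriv ?_
      simp; ring
    have := h1.exp.neg
    refine this.congr_deriv ?_
    ring
  have hint : IntegrableOn (fun u : ℝ => u * Real.exp (-u ^ 2 / 2)) (Ioi z) := by
    have := (integrable_mul_exp_neg_mul_sq (by norm_num : (0:ℝ) < 1/2))
    have h2 : (fun u : ℝ => u * Real.exp (-u ^ 2 / 2)) =
        fun u : ℝ => u * Real.exp (-(1/2) * u ^ 2) := by
      funext u; ring_nf
    rw [h2]
    exact this.integrableOn
  have htend : Tendsto (fun v : ℝ => -Real.exp (-v ^ 2 / 2)) atTop (𝓝 0) := by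
    rw [show (0:ℝ) = -0 by norm_num]
    apply Filter.Tendsto.neg
    apply Real.tendsto_exp_atBot.comp
    have h1 : Tendsto (fun v : ℝ => v ^ 2 / 2) atTop atTop :=
      (tendsto_pow_atTop (two_ne_zero)).atTop_div_const (by norm_num)
    have h2 := tendsto_neg_atTop_atBot.comp h1
    convert h2 using 2 with v
    simp [Function.comp]; ring
  have := integral_Ioi_of_hasDerivAt_of_tendsto' hderiv hint htend
  rw [this]; ring

lemma tail_le_inv (z : ℝ) (hz : 0 < z) :
    ∫ u in Ioi z, Real.exp (-u ^ 2 / 2) ≤ Real.exp (-z ^ 2 / 2) / z := by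
  rw [le_div_iff₀ hz, ← integral_mul_gpdf z, mul_comm]
  have hint : IntegrableOn (fun u : ℝ => u * Real.exp (-u ^ 2 / 2)) (Ioi z) := by
    have := (integrable_mul_exp_neg_mul_sq (by norm_num : (0:ℝ) < 1/2))
    have h2 : (fun u : ℝ => u * Real.exp (-u ^ 2 / 2)) =
        fun u : ℝ => u * Real.exp (-(1/2) * u ^ 2) := by funext u; ring_nf
    rw [h2]; exact this.integrableOn
  calc z * ∫ u in Ioi z, Real.exp (-u ^ 2 / 2)
      = ∫ u in Ioi z, z * Real.exp (-u ^ 2 / 2) := by rw [integral_const_mul]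
    _ ≤ ∫ u in Ioi z, u * Real.exp (-u ^ 2 / 2) := by
        apply setIntegral_mono_on (integrable_gpdf.integrableOn.const_mul z) hint
          measurableSet_Ioi
        intro u hu
        exact mul_le_mul_of_nonneg_right (le_of_lt hu) (Real.exp_pos _).le

lemma tail_le_quarter (z : ℝ) (hz : 0 ≤ z) :
    ∫ u in Ioi z, Real.exp (-u ^ 2 / 2)
      ≤ Real.sqrt 2 * Real.sqrt (2 * Real.pi) * Real.exp (-z ^ 2 / 4) := by
  have hquarter : Integrable (fun u : ℝ => Real.exp (-u ^ 2 / 4)) := by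
    have := integrable_exp_neg_mul_sq (by norm_num : (0:ℝ) < 1/4)
    convert this using 2 with u; ring_nf
  calc ∫ u in Ioi z, Real.exp (-u ^ 2 / 2)
      ≤ ∫ u in Ioi z, Real.exp (-z ^ 2 / 4) * Real.exp (-u ^ 2 / 4) := by
        apply setIntegral_mono_on integrable_gpdf.integrableOn
          ((hquarter.const_mul _).integrableOn) measurableSet_Ioi
        intro u hu
        rw [← Real.exp_add]
        apply Real.exp_le_exp.2
        have : z ^ 2 ≤ u ^ 2 := by nlinarith [(Set.mem_Ioi.1 hu).le, hz]
        nlinarith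
    _ ≤ Real.exp (-z ^ 2 / 4) * ∫ u : ℝ, Real.exp (-u ^ 2 / 4) := by
        rw [integral_const_mul]
        apply mul_le_mul_of_nonneg_left _ (Real.exp_pos _).le
        exact setIntegral_le_integral hquarter
          (Filter.Eventually.of_forall fun u => (Real.exp_pos _).le)
    _ = Real.sqrt 2 * Real.sqrt (2 * Real.pi) * Real.exp (-z ^ 2 / 4) := by
        have := integral_gaussian (1/4 : ℝ)
        simp only [show ∀ u : ℝ, -(1/4 : ℝ) * u ^ 2 = -u ^ 2 / 4 by intro u; ring] at this
        rw [this, show Real.pi / (1/4) = 2 * (2 * Real.pi) by ring,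
          Real.sqrt_mul (by norm_num)]
        ring

noncomputable def stdPhi (x : ℝ) : ℝ :=
  (Real.sqrt (2 * Real.pi))⁻¹ * ∫ u in Set.Iic x, Real.exp (-u ^ 2 / 2)

lemma sqrt_two_pi_pos : 0 < Real.sqrt (2 * Real.pi) :=
  Real.sqrt_pos.2 (by positivity)

lemma stdPhi_nonneg (x : ℝ) : 0 ≤ stdPhi x := by
  apply mul_nonneg (inv_nonneg.2 (Real.sqrt_nonneg _))
  exact setIntegral_nonneg measurableSet_Iic fun u _ => (Real.exp_pos _).le

lemma integral_Iic_gpdf_le (x : ℝ) :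
    ∫ u in Iic x, Real.exp (-u ^ 2 / 2) ≤ Real.sqrt (2 * Real.pi) := by
  rw [← integral_gpdf]
  exact setIntegral_le_integral integrable_gpdf
    (Filter.Eventually.of_forall fun u => (Real.exp_pos _).le)

lemma stdPhi_le_one (x : ℝ) : stdPhi x ≤ 1 := by
  rw [stdPhi, ← inv_mul_cancel₀ sqrt_two_pi_pos.ne']
  exact mul_le_mul_of_nonneg_left (integral_Iic_gpdf_le x)
    (inv_nonneg.2 (Real.sqrt_nonneg _))

lemma one_sub_stdPhi (z : ℝ) :
    1 - stdPhi z = (Real.sqrt (2 * Real.pi))⁻¹ * ∫ u in Ioi z, Real.exp (-u ^ 2 / 2) := by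
  have := intervalIntegral.integral_Iic_add_Ioi (μ := volume) (b := z)
    integrable_gpdf.integrableOn integrable_gpdf.integrableOn
  rw [integral_gpdf] at this
  rw [stdPhi, show (∫ u in Ioi z, Real.exp (-u ^ 2 / 2))
      = Real.sqrt (2 * Real.pi) - ∫ u in Iic z, Real.exp (-u ^ 2 / 2) by linarith [this]]
  field_simp

lemma stdPhi_eq_tail (x : ℝ) :
    stdPhi x = (Real.sqrt (2 * Real.pi))⁻¹ * ∫ u in Ioi (-x), Real.exp (-u ^ 2 / 2) := by
  rw [stdPhi]
  congr 1
  rw [← integral_comp_neg_Iic]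
  congr 1
  funext u
  ring_nf

lemma hasDerivAt_stdPhi (x : ℝ) :
    HasDerivAt stdPhi ((Real.sqrt (2 * Real.pi))⁻¹ * Real.exp (-x ^ 2 / 2)) x := by
  have key : ∀ y : ℝ, stdPhi y = (Real.sqrt (2 * Real.pi))⁻¹ *
      ((∫ u in Iic (0:ℝ), Real.exp (-u ^ 2 / 2)) +
        ∫ u in (0:ℝ)..y, Real.exp (-u ^ 2 / 2)) := by
    intro y
    rw [stdPhi, ← intervalIntegral.integral_Iic_sub_Iic
      integrable_gpdf.integrableOn integrable_gpdf.integrableOn]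
    ring
  have hd : HasDerivAt (fun y => ∫ u in (0:ℝ)..y, Real.exp (-u ^ 2 / 2))
      (Real.exp (-x ^ 2 / 2)) x := by
    apply intervalIntegral.integral_hasDerivAt_right
      (integrable_gpdf.intervalIntegrable)
      (integrable_gpdf.aestronglyMeasurable.stronglyMeasurableAtFilter)
    exact (Real.continuous_exp.comp (by continuity)).continuousAt
  have h2 : HasDerivAt (fun y => (Real.sqrt (2 * Real.pi))⁻¹ *
      ((∫ u in Iic (0:ℝ), Real.exp (-u ^ 2 / 2)) + ∫ u in (0:ℝ)..y, Real.exp (-u ^ 2 / 2)))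
      ((Real.sqrt (2 * Real.pi))⁻¹ * Real.exp (-x ^ 2 / 2)) x := by
    have := (hd.const_add (∫ u in Iic (0:ℝ), Real.exp (-u ^ 2 / 2))).const_mul
      ((Real.sqrt (2 * Real.pi))⁻¹)
    simpa using this
  apply h2.congr_of_eventuallyEq
  filter_upwards with y
  rw [key y]

theorem steinF_deriv_bound_center (z x : ℝ) (hz : 0 < z) (hx : |x| ≤ z / 2) :
    |deriv (fun y => Real.sqrt (2 * Real.pi) * Real.exp (y ^ 2 / 2) * stdPhi y * (1 - stdPhi z)) x|
      ≤ 2 * Real.exp (-z ^ 2 / 4) := by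
  obtain ⟨hx1, hx2⟩ := abs_le.1 hx
  have hcpos := sqrt_two_pi_pos
  set c := Real.sqrt (2 * Real.pi) with hc
  set C := 1 - stdPhi z with hCdef
  have he : Real.exp (x ^ 2 / 2) * Real.exp (-x ^ 2 / 2) = 1 := by
    rw [← Real.exp_add, show x ^ 2 / 2 + -x ^ 2 / 2 = (0:ℝ) by ring, Real.exp_zero]
  -- derivative computation
  have hg : HasDerivAt (fun y : ℝ => c * Real.exp (y ^ 2 / 2))
      (c * (Real.exp (x ^ 2 / 2) * x)) x := by
    have h1 : HasDerivAt (fun y : ℝ => y ^ 2 / 2) x x := by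
      have := (hasDerivAt_pow 2 x).div_const 2
      refine this.congr_deriv ?_
      simp
    exact h1.exp.const_mul c
  have hf : HasDerivAt
      (fun y => Real.sqrt (2 * Real.pi) * Real.exp (y ^ 2 / 2) * stdPhi y * (1 - stdPhi z))
      ((c * (Real.exp (x ^ 2 / 2) * x) * stdPhi x +
        c * Real.exp (x ^ 2 / 2) * (c⁻¹ * Real.exp (-x ^ 2 / 2))) * C) x :=
    (hg.mul (hasDerivAt_stdPhi x)).mul_const C
  have hone : c * Real.exp (x ^ 2 / 2) * (c⁻¹ * Real.exp (-x ^ 2 / 2)) = 1 := by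
    rw [show c * Real.exp (x ^ 2 / 2) * (c⁻¹ * Real.exp (-x ^ 2 / 2))
        = (c * c⁻¹) * (Real.exp (x ^ 2 / 2) * Real.exp (-x ^ 2 / 2)) by ring,
      he, mul_inv_cancel₀ hcpos.ne', one_mul]
  set D := c * (Real.exp (x ^ 2 / 2) * x) * stdPhi x with hDdef
  have hderiv_eq : deriv
      (fun y => Real.sqrt (2 * Real.pi) * Real.exp (y ^ 2 / 2) * stdPhi y * (1 - stdPhi z)) x
      = (D + 1) * C := by
    rw [hf.deriv, hone]
  -- basic bounds
  have hC0 : 0 ≤ C := by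
    rw [hCdef]; linarith [stdPhi_le_one z]
  have hphi0 : 0 ≤ stdPhi x := stdPhi_nonneg x
  have hexpos : (0:ℝ) < Real.exp (x ^ 2 / 2) := Real.exp_pos _
  have hD_lb : -1 ≤ D := by
    rcases le_or_gt 0 x with h | h
    · have : 0 ≤ D := by
        exact mul_nonneg (mul_nonneg hcpos.le (mul_nonneg hexpos.le h)) hphi0
      linarith
    · have hnx : 0 < -x := by linarith
      have ht := tail_le_inv (-x) hnx
      have hs : stdPhi x ≤ c⁻¹ * (Real.exp (-x ^ 2 / 2) / (-x)) := by
        rw [stdPhi_eq_tail x]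
        have hexeq : Real.exp (-(-x) ^ 2 / 2) = Real.exp (-x ^ 2 / 2) := by ring_nf
        rw [hexeq] at ht
        exact mul_le_mul_of_nonneg_left ht (inv_nonneg.2 hcpos.le)
      have hmul : D ≥ c * (Real.exp (x ^ 2 / 2) * x) *
          (c⁻¹ * (Real.exp (-x ^ 2 / 2) / (-x))) := by
        rw [hDdef]
        apply mul_le_mul_of_nonpos_left hs
        exact mul_nonpos_iff.2 (Or.inl ⟨hcpos.le,
          mul_nonpos_iff.2 (Or.inl ⟨hexpos.le, h.le⟩)⟩)
      have heq : c * (Real.exp (x ^ 2 / 2) * x) * (c⁻¹ * (Real.exp (-x ^ 2 / 2) / (-x)))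
          = -1 := by
        rw [show c * (Real.exp (x ^ 2 / 2) * x) * (c⁻¹ * (Real.exp (-x ^ 2 / 2) / (-x)))
            = (c * c⁻¹) * (Real.exp (x ^ 2 / 2) * Real.exp (-x ^ 2 / 2)) * (x / (-x)) by ring,
          he, mul_inv_cancel₀ hcpos.ne', div_neg, div_self (ne_of_lt h)]
        norm_num
      rw [heq] at hmul
      exact hmul
  have hD_ub : D ≤ c * (z / 2) * Real.exp (z ^ 2 / 8) := by
    rcases le_or_gt x 0 with h | h
    · have hD0 : D ≤ 0 := by
        rw [hDdef]
        have hneg : c * (Real.exp (x ^ 2 / 2) * x) ≤ 0 := mul_nonpos_iff.2 (Or.inl ⟨hcpos.le,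
          mul_nonpos_iff.2 (Or.inl ⟨hexpos.le, h⟩)⟩)
        exact mul_nonpos_iff.2 (Or.inr ⟨hneg, hphi0⟩)
      have : 0 ≤ c * (z / 2) * Real.exp (z ^ 2 / 8) := by positivity
      linarith
    · have hxe : Real.exp (x ^ 2 / 2) ≤ Real.exp (z ^ 2 / 8) := by
        apply Real.exp_le_exp.2
        nlinarith
      have h1 := mul_le_mul_of_nonneg_left (stdPhi_le_one x)
        (mul_nonneg hcpos.le (mul_nonneg hexpos.le h.le))
      rw [mul_one] at h1
      have h2' : Real.exp (x ^ 2 / 2) * x ≤ Real.exp (z ^ 2 / 8) * (z / 2) :=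
        mul_le_mul hxe hx2 h.le (Real.exp_pos _).le
      have h2 := mul_le_mul_of_nonneg_left h2' hcpos.le
      have h3 : c * (Real.exp (z ^ 2 / 8) * (z / 2)) = c * (z / 2) * Real.exp (z ^ 2 / 8) := by
        ring
      rw [hDdef]
      linarith
  -- tail bounds on C
  have hCq : C ≤ Real.sqrt 2 * Real.exp (-z ^ 2 / 4) := by
    rw [hCdef, one_sub_stdPhi z]
    calc c⁻¹ * ∫ u in Set.Ioi z, Real.exp (-u ^ 2 / 2)
        ≤ c⁻¹ * (Real.sqrt 2 * c * Real.exp (-z ^ 2 / 4)) :=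
          mul_le_mul_of_nonneg_left (tail_le_quarter z hz.le) (inv_nonneg.2 hcpos.le)
      _ = Real.sqrt 2 * Real.exp (-z ^ 2 / 4) := by
          rw [show c⁻¹ * (Real.sqrt 2 * c * Real.exp (-z ^ 2 / 4))
              = (c * c⁻¹) * (Real.sqrt 2 * Real.exp (-z ^ 2 / 4)) by ring,
            mul_inv_cancel₀ hcpos.ne', one_mul]
  have hCi : C ≤ c⁻¹ * (Real.exp (-z ^ 2 / 2) / z) := by
    rw [hCdef, one_sub_stdPhi z]
    exact mul_le_mul_of_nonneg_left (tail_le_inv z hz) (inv_nonneg.2 hcpos.le)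
  -- combine
  have hDC : D * C ≤ (1/2) * Real.exp (-z ^ 2 / 4) := by
    have step1 : D * C ≤ (c * (z / 2) * Real.exp (z ^ 2 / 8)) * C :=
      mul_le_mul_of_nonneg_right hD_ub hC0
    have step2 : (c * (z / 2) * Real.exp (z ^ 2 / 8)) * C
        ≤ (c * (z / 2) * Real.exp (z ^ 2 / 8)) * (c⁻¹ * (Real.exp (-z ^ 2 / 2) / z)) :=
      mul_le_mul_of_nonneg_left hCi (by positivity)
    have step3 : (c * (z / 2) * Real.exp (z ^ 2 / 8)) * (c⁻¹ * (Real.exp (-z ^ 2 / 2) / z))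
        = (1/2) * Real.exp (-3 * z ^ 2 / 8) := by
      rw [show Real.exp (-3 * z ^ 2 / 8) = Real.exp (z ^ 2 / 8) * Real.exp (-z ^ 2 / 2) by
          rw [← Real.exp_add]; ring_nf,
        show (c * (z / 2) * Real.exp (z ^ 2 / 8)) * (c⁻¹ * (Real.exp (-z ^ 2 / 2) / z))
          = (c * c⁻¹) * (z / z) * ((1/2) * (Real.exp (z ^ 2 / 8) * Real.exp (-z ^ 2 / 2)))
          by ring,
        mul_inv_cancel₀ hcpos.ne', div_self hz.ne', one_mul, one_mul]
    have step4 : Real.exp (-3 * z ^ 2 / 8) ≤ Real.exp (-z ^ 2 / 4) := by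
      apply Real.exp_le_exp.2; nlinarith
    calc D * C ≤ _ := step1
      _ ≤ _ := step2
      _ = _ := step3
      _ ≤ (1/2) * Real.exp (-z ^ 2 / 4) := by linarith
  have hsqrt2 : Real.sqrt 2 ≤ 3/2 := by
    rw [show (3/2:ℝ) = Real.sqrt ((3/2)^2) from (Real.sqrt_sq (by norm_num)).symm]
    apply Real.sqrt_le_sqrt; norm_num
  have hexp4 := Real.exp_pos (-z ^ 2 / 4)
  rw [hderiv_eq, abs_of_nonneg (mul_nonneg (by linarith : (0:ℝ) ≤ D + 1) hC0)]
  have hsplit : (D + 1) * C = D * C + C := by ring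
  have hq : Real.sqrt 2 * Real.exp (-z ^ 2 / 4) ≤ (3/2) * Real.exp (-z ^ 2 / 4) :=
    mul_le_mul_of_nonneg_right hsqrt2 hexp4.le
  rw [hsplit]
  linarith
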